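/- Let 0 < a, 0 < b and a + b < 1, and set τ = 1 − a − b and ā = 1 − a, b̄ = 1 − b. Then (1/τ²)·∫_a^{b̄} ∫_a^{b̄} (min{u, v} − u·v)·Φ⁻¹(u) / (φ(Φ⁻¹(v))·φ(Φ⁻¹(u))) dv du = (1/(2τ²))·[ a·ā·(Φ⁻¹(a))³ + b·b̄·(Φ⁻¹(b̄))³ − a·b·Φ⁻¹(a)·Φ⁻¹(b̄)·(Φ⁻¹(a) + Φ⁻¹(b̄)) − τ·c₁·(a·(Φ⁻¹(a))² + b·(Φ⁻¹(b̄))²) − τ·c₂·(a·Φ⁻¹(a) + b·Φ⁻¹(b̄)) − τ²·c₁·c₂ + τ·c₃ ]. -/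

import Mathlib

open Real MeasureTheory Set Filter Topology

/-- Standard normal density `φ(x) = (2π)^(−1/2) exp(−x²/2)`. -/
noncomputable def stdPDF (x : ℝ) : ℝ := (Real.sqrt (2 * Real.pi))⁻¹ * Real.exp (-x ^ 2 / 2)

/-- Standard normal cumulative distribution function `Φ(x) = ∫_{−∞}^x φ(u) du`. -/
noncomputable def stdCDF (x : ℝ) : ℝ := ∫ u in Set.Iic x, stdPDF u

/-- Mills hazard `h(γ) = φ(γ)/(1 − Φ(γ))`. -/
noncomputable def millsHazard (γ : ℝ) : ℝ := stdPDF γ / (1 - stdCDF γ)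

/-- The standard normal quantile function `Φ⁻¹`, the inverse of `Φ`. -/
noncomputable def stdQuantile : ℝ → ℝ := Function.invFun stdCDF

/-- Trimmed standard normal quantile moment
`c_k = (1/(1 − a − b)) ∫_a^{1−b} (Φ⁻¹(s))^k ds`. -/
noncomputable def trimMoment (a b : ℝ) (k : ℕ) : ℝ :=
  (1 - a - b)⁻¹ * ∫ s in a..(1 - b), (stdQuantile s) ^ k

lemma stdPDF_pos (x : ℝ) : 0 < stdPDF x := by
  have h2π : (0:ℝ) < 2 * Real.pi := by positivity
  exact mul_pos (inv_pos.2 (Real.sqrt_pos.2 h2π)) (Real.exp_pos _)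

lemma continuous_stdPDF : Continuous stdPDF := by
  unfold stdPDF
  fun_prop

lemma stdPDF_eq (x : ℝ) : stdPDF x = (Real.sqrt (2 * Real.pi))⁻¹ * Real.exp (-(1/2) * x ^ 2) := by
  unfold stdPDF; ring_nf

lemma integrable_stdPDF : Integrable stdPDF := by
  have : Integrable (fun x : ℝ => Real.exp (-(1/2) * x ^ 2)) :=
    integrable_exp_neg_mul_sq (by norm_num)
  have := this.const_mul (Real.sqrt (2 * Real.pi))⁻¹
  refine this.congr (Filter.Eventually.of_forall fun x => ?_)
  rw [stdPDF_eq]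

lemma integral_stdPDF : ∫ x, stdPDF x = 1 := by
  have h := integral_gaussian (1/2 : ℝ)
  have : ∫ x : ℝ, stdPDF x = (Real.sqrt (2 * Real.pi))⁻¹ * ∫ x : ℝ, Real.exp (-(1/2) * x ^ 2) := by
    rw [← integral_const_mul]
    congr 1; ext x; rw [stdPDF_eq]
  rw [this, h]
  rw [show Real.pi / (1/2 : ℝ) = 2 * Real.pi by ring]
  rw [inv_mul_cancel₀]
  positivity

lemma hasDerivAt_stdCDF (x : ℝ) : HasDerivAt stdCDF (stdPDF x) x := by
  have key : ∀ y : ℝ, stdCDF y = stdCDF 0 + ∫ t in (0:ℝ)..y, stdPDF t := by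
    intro y
    have := intervalIntegral.integral_Iic_sub_Iic (μ := volume) (f := stdPDF) (a := (0:ℝ)) (b := y)
      integrable_stdPDF.integrableOn integrable_stdPDF.integrableOn
    unfold stdCDF; linarith [this]
  have h1 : HasDerivAt (fun y => stdCDF 0 + ∫ t in (0:ℝ)..y, stdPDF t) (stdPDF x) x := by
    refine HasDerivAt.const_add _ ?_
    exact intervalIntegral.integral_hasDerivAt_right
      integrable_stdPDF.intervalIntegrable
      continuous_stdPDF.aestronglyMeasurable.stronglyMeasurableAtFilter
      continuous_stdPDF.continuousAt
  exact h1.congr_of_eventuallyEq (Filter.Eventually.of_forall key)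

lemma continuous_stdCDF : Continuous stdCDF :=
  continuous_iff_continuousAt.2 fun x => (hasDerivAt_stdCDF x).continuousAt

lemma stdCDF_strictMono : StrictMono stdCDF := by
  intro x y hxy
  have h : stdCDF y - stdCDF x = ∫ t in x..y, stdPDF t := by
    unfold stdCDF
    exact intervalIntegral.integral_Iic_sub_Iic integrable_stdPDF.integrableOn
      integrable_stdPDF.integrableOn
  have hpos : 0 < ∫ t in x..y, stdPDF t :=
    intervalIntegral.intervalIntegral_pos_of_pos
      integrable_stdPDF.intervalIntegrable (fun t => stdPDF_pos t) hxy
  linarith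

lemma tendsto_stdCDF_atBot : Tendsto stdCDF atBot (𝓝 0) := by
  have h : ∀ x : ℝ, stdCDF x = stdCDF 0 - ∫ t in x..(0:ℝ), stdPDF t := by
    intro x
    have := intervalIntegral.integral_Iic_sub_Iic (μ := volume) (f := stdPDF) (a := x) (b := (0:ℝ))
      integrable_stdPDF.integrableOn integrable_stdPDF.integrableOn
    unfold stdCDF; linarith
  have h2 : Tendsto (fun x : ℝ => ∫ t in x..(0:ℝ), stdPDF t) atBot (𝓝 (stdCDF 0)) :=
    MeasureTheory.intervalIntegral_tendsto_integral_Iic 0 integrable_stdPDF.integrableOn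
      tendsto_id
  have := (tendsto_const_nhds (x := stdCDF 0) (f := atBot)).sub h2
  rw [sub_self] at this
  exact this.congr fun x => (h x).symm

lemma tendsto_stdCDF_atTop : Tendsto stdCDF atTop (𝓝 1) := by
  have h : ∀ x : ℝ, stdCDF x = stdCDF 0 + ∫ t in (0:ℝ)..x, stdPDF t := by
    intro x
    have := intervalIntegral.integral_Iic_sub_Iic (μ := volume) (f := stdPDF) (a := (0:ℝ)) (b := x)
      integrable_stdPDF.integrableOn integrable_stdPDF.integrableOn
    unfold stdCDF; linarith
  have h2 : Tendsto (fun x : ℝ => ∫ t in (0:ℝ)..x, stdPDF t) atTop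
      (𝓝 (∫ t in Set.Ioi (0:ℝ), stdPDF t)) :=
    MeasureTheory.intervalIntegral_tendsto_integral_Ioi 0 integrable_stdPDF.integrableOn
      tendsto_id
  have hsum : stdCDF 0 + ∫ t in Set.Ioi (0:ℝ), stdPDF t = 1 := by
    unfold stdCDF
    rw [intervalIntegral.integral_Iic_add_Ioi integrable_stdPDF.integrableOn
      integrable_stdPDF.integrableOn, integral_stdPDF]
  have := (tendsto_const_nhds (x := stdCDF 0) (f := atTop)).add h2
  rw [hsum] at this
  exact this.congr fun x => (h x).symm

lemma stdCDF_surjOn : ∀ p ∈ Set.Ioo (0:ℝ) 1, ∃ x, stdCDF x = p := by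
  intro p hp
  obtain ⟨x₀, hx₀⟩ : ∃ x₀, stdCDF x₀ < p := by
    have := tendsto_stdCDF_atBot.eventually_lt_const hp.1
    exact this.exists
  obtain ⟨x₁, hx₁⟩ : ∃ x₁, p < stdCDF x₁ := by
    have := tendsto_stdCDF_atTop.eventually_const_lt hp.2
    exact this.exists
  have hle : x₀ ≤ x₁ := le_of_lt (stdCDF_strictMono.lt_iff_lt.1 (lt_trans hx₀ hx₁))
  have := intermediate_value_Icc hle continuous_stdCDF.continuousOn
  obtain ⟨x, _, hx⟩ := this ⟨le_of_lt hx₀, le_of_lt hx₁⟩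
  exact ⟨x, hx⟩

lemma stdCDF_stdQuantile {p : ℝ} (hp : p ∈ Set.Ioo (0:ℝ) 1) : stdCDF (stdQuantile p) = p :=
  Function.invFun_eq (stdCDF_surjOn p hp)

lemma stdQuantile_stdCDF (x : ℝ) : stdQuantile (stdCDF x) = x :=
  Function.leftInverse_invFun stdCDF_strictMono.injective x

lemma stdCDF_mem_Ioo (x : ℝ) : stdCDF x ∈ Set.Ioo (0:ℝ) 1 := by
  constructor
  · have : stdCDF (x-1) < stdCDF x := stdCDF_strictMono (by linarith)
    have h0 : 0 ≤ stdCDF (x-1) := by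
      unfold stdCDF
      exact MeasureTheory.integral_nonneg fun t => (stdPDF_pos t).le
    linarith
  · have : stdCDF x < stdCDF (x+1) := stdCDF_strictMono (by linarith)
    have h1 : stdCDF (x+1) ≤ 1 := by
      rw [← integral_stdPDF]
      exact MeasureTheory.setIntegral_le_integral integrable_stdPDF
        (Filter.Eventually.of_forall fun t => (stdPDF_pos t).le)
    linarith

lemma stdQuantile_lt {p q : ℝ} (hp : p ∈ Set.Ioo (0:ℝ) 1) (hq : q ∈ Set.Ioo (0:ℝ) 1)
    (h : p < q) : stdQuantile p < stdQuantile q := by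
  by_contra hle
  push_neg at hle
  have : stdCDF (stdQuantile q) ≤ stdCDF (stdQuantile p) := stdCDF_strictMono.monotone hle
  rw [stdCDF_stdQuantile hq, stdCDF_stdQuantile hp] at this
  linarith

lemma continuousAt_stdQuantile {p : ℝ} (hp : p ∈ Set.Ioo (0:ℝ) 1) :
    ContinuousAt stdQuantile p := by
  rw [ContinuousAt, tendsto_order]
  constructor
  · intro y hy
    have hkey : stdCDF y < p := by
      have : stdCDF y < stdCDF (stdQuantile p) := stdCDF_strictMono hy
      rwa [stdCDF_stdQuantile hp] at this
    have hev : ∀ᶠ s in 𝓝 p, stdCDF y < s ∧ s ∈ Set.Ioo (0:ℝ) 1 :=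
      (eventually_gt_nhds hkey).and (Ioo_mem_nhds hp.1 hp.2)
    refine hev.mono fun s ⟨hs1, hs2⟩ => ?_
    by_contra hle
    push_neg at hle
    have : stdCDF (stdQuantile s) ≤ stdCDF y := stdCDF_strictMono.monotone hle
    rw [stdCDF_stdQuantile hs2] at this
    linarith
  · intro y hy
    have hkey : p < stdCDF y := by
      have : stdCDF (stdQuantile p) < stdCDF y := stdCDF_strictMono hy
      rwa [stdCDF_stdQuantile hp] at this
    have hev : ∀ᶠ s in 𝓝 p, s < stdCDF y ∧ s ∈ Set.Ioo (0:ℝ) 1 :=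
      (eventually_lt_nhds hkey).and (Ioo_mem_nhds hp.1 hp.2)
    refine hev.mono fun s ⟨hs1, hs2⟩ => ?_
    by_contra hle
    push_neg at hle
    have : stdCDF y ≤ stdCDF (stdQuantile s) := stdCDF_strictMono.monotone hle
    rw [stdCDF_stdQuantile hs2] at this
    linarith

lemma hasDerivAt_stdQuantile {p : ℝ} (hp : p ∈ Set.Ioo (0:ℝ) 1) :
    HasDerivAt stdQuantile (stdPDF (stdQuantile p))⁻¹ p := by
  refine HasDerivAt.of_local_left_inverse (continuousAt_stdQuantile hp)
    (hasDerivAt_stdCDF _) (ne_of_gt (stdPDF_pos _)) ?_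
  filter_upwards [Ioo_mem_nhds hp.1 hp.2] with s hs
  exact stdCDF_stdQuantile hs

lemma hasDerivAt_stdPDF (x : ℝ) : HasDerivAt stdPDF (-x * stdPDF x) x := by
  have h : HasDerivAt (fun y : ℝ => -y ^ 2 / 2) (-x) x := by
    have := ((hasDerivAt_pow 2 x).neg).div_const 2
    refine this.congr_deriv ?_; ring
  have := ((Real.hasDerivAt_exp _).comp x h).const_mul (Real.sqrt (2 * Real.pi))⁻¹
  unfold stdPDF
  refine this.congr_deriv ?_; ring

lemma hasDerivAt_pdfQ {s : ℝ} (hs : s ∈ Set.Ioo (0:ℝ) 1) :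
    HasDerivAt (fun t => stdPDF (stdQuantile t)) (-stdQuantile s) s := by
  have hφ : stdPDF (stdQuantile s) ≠ 0 := ne_of_gt (stdPDF_pos _)
  have := (hasDerivAt_stdPDF (stdQuantile s)).comp s (hasDerivAt_stdQuantile hs)
  refine this.congr_deriv ?_
  field_simp

lemma contQ : ContinuousOn stdQuantile (Set.Ioo 0 1) :=
  fun s hs => (continuousAt_stdQuantile hs).continuousWithinAt

lemma contP : ContinuousOn (fun s => stdPDF (stdQuantile s)) (Set.Ioo 0 1) :=
  continuous_stdPDF.comp_continuousOn contQ

lemma contPinv : ContinuousOn (fun s => (stdPDF (stdQuantile s))⁻¹) (Set.Ioo 0 1) :=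
  contP.inv₀ fun s _ => ne_of_gt (stdPDF_pos _)

/-- FTC helper on subintervals of `(0,1)`. -/
lemma ftc_Ioo {F f : ℝ → ℝ} {x y : ℝ} (hxy : x ≤ y) (hsub : Set.Icc x y ⊆ Set.Ioo 0 1)
    (hF : ∀ s ∈ Set.Icc x y, HasDerivAt F (f s) s) (hf : ContinuousOn f (Set.Icc x y)) :
    ∫ s in x..y, f s = F y - F x := by
  apply intervalIntegral.integral_eq_sub_of_hasDerivAt
  · intro s hs; exact hF s (by rwa [Set.uIcc_of_le hxy] at hs)
  · apply ContinuousOn.intervalIntegrable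
    rwa [Set.uIcc_of_le hxy]

lemma integral_Qderiv {x y : ℝ} (hxy : x ≤ y) (hsub : Set.Icc x y ⊆ Set.Ioo 0 1) :
    ∫ v in x..y, (stdPDF (stdQuantile v))⁻¹ = stdQuantile y - stdQuantile x := by
  refine ftc_Ioo hxy hsub (fun s hs => hasDerivAt_stdQuantile (hsub hs)) (contPinv.mono hsub)

lemma integral_id_mul_Qderiv {x y : ℝ} (hxy : x ≤ y) (hsub : Set.Icc x y ⊆ Set.Ioo 0 1) :
    ∫ v in x..y, v * (stdPDF (stdQuantile v))⁻¹ =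
      (y * stdQuantile y + stdPDF (stdQuantile y))
        - (x * stdQuantile x + stdPDF (stdQuantile x)) := by
  refine ftc_Ioo (F := fun t => t * stdQuantile t + stdPDF (stdQuantile t)) hxy hsub (fun s hs => ?_) ?_
  · have hs' := hsub hs
    have hφ : stdPDF (stdQuantile s) ≠ 0 := ne_of_gt (stdPDF_pos _)
    have h := ((hasDerivAt_id s).mul (hasDerivAt_stdQuantile hs')).add (hasDerivAt_pdfQ hs')
    refine h.congr_deriv ?_
    simp only [id]
    field_simp
    ring
  · exact (continuousOn_id.mul (contPinv.mono hsub))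

lemma integral_Q_mul_Qderiv {x y : ℝ} (hxy : x ≤ y) (hsub : Set.Icc x y ⊆ Set.Ioo 0 1) :
    ∫ v in x..y, stdQuantile v * (stdPDF (stdQuantile v))⁻¹ =
      (stdQuantile y) ^ 2 / 2 - (stdQuantile x) ^ 2 / 2 := by
  refine ftc_Ioo (F := fun t => (stdQuantile t) ^ 2 / 2) hxy hsub (fun s hs => ?_) ?_
  · have hs' := hsub hs
    have hφ : stdPDF (stdQuantile s) ≠ 0 := ne_of_gt (stdPDF_pos _)
    have h := ((hasDerivAt_stdQuantile hs').pow 2).div_const 2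
    refine h.congr_deriv ?_
    field_simp; ring
  · exact ((contQ.mono hsub).mul (contPinv.mono hsub))

lemma integral_id_mul_Q_mul_Qderiv {x y : ℝ} (hxy : x ≤ y) (hsub : Set.Icc x y ⊆ Set.Ioo 0 1) :
    ∫ v in x..y, v * stdQuantile v * (stdPDF (stdQuantile v))⁻¹ =
      (y * (stdQuantile y) ^ 2 / 2 - y / 2 + stdQuantile y * stdPDF (stdQuantile y) / 2)
      - (x * (stdQuantile x) ^ 2 / 2 - x / 2 + stdQuantile x * stdPDF (stdQuantile x) / 2) := by
  refine ftc_Ioo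
    (F := fun t => t * (stdQuantile t) ^ 2 / 2 - t / 2 + stdQuantile t * stdPDF (stdQuantile t) / 2)
    hxy hsub (fun s hs => ?_) ?_
  · have hs' := hsub hs
    have hφ : stdPDF (stdQuantile s) ≠ 0 := ne_of_gt (stdPDF_pos _)
    have hQ := hasDerivAt_stdQuantile hs'
    have hP := hasDerivAt_pdfQ hs'
    have h1 := ((hasDerivAt_id s).mul (hQ.pow 2)).div_const 2
    have h2 := (hasDerivAt_id s).div_const 2
    have h3 := (hQ.mul hP).div_const 2
    have h := (h1.sub h2).add h3
    refine h.congr_deriv ?_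
    simp only [id, Pi.pow_apply]
    field_simp; ring
  · exact ((continuousOn_id.mul (contQ.mono hsub)).mul (contPinv.mono hsub))

lemma integral_Q_pow_one {x y : ℝ} (hxy : x ≤ y) (hsub : Set.Icc x y ⊆ Set.Ioo 0 1) :
    ∫ s in x..y, stdQuantile s ^ 1 =
      stdPDF (stdQuantile x) - stdPDF (stdQuantile y) := by
  have : ∫ s in x..y, stdQuantile s ^ 1 =
      (fun t => -stdPDF (stdQuantile t)) y - (fun t => -stdPDF (stdQuantile t)) x := by
    refine ftc_Ioo (F := fun t => -stdPDF (stdQuantile t)) hxy hsub (fun s hs => ?_) ?_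
    · have h := (hasDerivAt_pdfQ (hsub hs)).neg
      refine h.congr_deriv ?_; ring
    · have : ContinuousOn (fun s => stdQuantile s ^ 1) (Set.Icc x y) :=
        (contQ.mono hsub).pow 1
      exact this
  rw [this]; ring

lemma integral_Q_pow_two {x y : ℝ} (hxy : x ≤ y) (hsub : Set.Icc x y ⊆ Set.Ioo 0 1) :
    ∫ s in x..y, stdQuantile s ^ 2 =
      (y - stdQuantile y * stdPDF (stdQuantile y))
        - (x - stdQuantile x * stdPDF (stdQuantile x)) := by
  refine ftc_Ioo (F := fun t => t - stdQuantile t * stdPDF (stdQuantile t)) hxy hsub (fun s hs => ?_) ((contQ.mono hsub).pow 2)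
  have hs' := hsub hs
  have hφ : stdPDF (stdQuantile s) ≠ 0 := ne_of_gt (stdPDF_pos _)
  have hQ := hasDerivAt_stdQuantile hs'
  have hP := hasDerivAt_pdfQ hs'
  have h := (hasDerivAt_id s).sub (hQ.mul hP)
  refine h.congr_deriv ?_
  field_simp; ring

lemma integral_Q_pow_three {x y : ℝ} (hxy : x ≤ y) (hsub : Set.Icc x y ⊆ Set.Ioo 0 1) :
    ∫ s in x..y, stdQuantile s ^ 3 =
      (-2 * stdPDF (stdQuantile y) - (stdQuantile y) ^ 2 * stdPDF (stdQuantile y))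
        - (-2 * stdPDF (stdQuantile x) - (stdQuantile x) ^ 2 * stdPDF (stdQuantile x)) := by
  refine ftc_Ioo
    (F := fun t => -2 * stdPDF (stdQuantile t) - (stdQuantile t) ^ 2 * stdPDF (stdQuantile t))
    hxy hsub (fun s hs => ?_) ((contQ.mono hsub).pow 3)
  have hs' := hsub hs
  have hφ : stdPDF (stdQuantile s) ≠ 0 := ne_of_gt (stdPDF_pos _)
  have hQ := hasDerivAt_stdQuantile hs'
  have hP := hasDerivAt_pdfQ hs'
  have h := ((hP.const_mul (2:ℝ)).neg).sub ((hQ.pow 2).mul hP)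
  refine HasDerivAt.congr_of_eventuallyEq (h.congr_deriv ?_) (Filter.Eventually.of_forall fun t => ?_)
  · field_simp
    simp only [Pi.pow_apply]
    ring
  · simp only [Pi.sub_apply, Pi.neg_apply, Pi.mul_apply, Pi.pow_apply]
    ring

lemma integral_one_sub_mul_Qderiv {x y : ℝ} (hxy : x ≤ y) (hsub : Set.Icc x y ⊆ Set.Ioo 0 1) :
    ∫ v in x..y, (1 - v) * (stdPDF (stdQuantile v))⁻¹ =
      ((1 - y) * stdQuantile y - stdPDF (stdQuantile y))
        - ((1 - x) * stdQuantile x - stdPDF (stdQuantile x)) := by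
  refine ftc_Ioo (F := fun t => (1 - t) * stdQuantile t - stdPDF (stdQuantile t)) hxy hsub
    (fun s hs => ?_) ((continuousOn_const.sub continuousOn_id).mul (contPinv.mono hsub))
  have hs' := hsub hs
  have hφ : stdPDF (stdQuantile s) ≠ 0 := ne_of_gt (stdPDF_pos _)
  have hQ := hasDerivAt_stdQuantile hs'
  have hP := hasDerivAt_pdfQ hs'
  have hconst : HasDerivAt (fun t : ℝ => 1 - t) (-1 : ℝ) s := by
    simpa using (hasDerivAt_id s).const_sub 1
  have h := (hconst.mul hQ).sub hP
  refine h.congr_deriv ?_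
  ring

lemma inner_eval {x y u : ℝ} (hsub : Set.Icc x y ⊆ Set.Ioo 0 1) (hu : u ∈ Set.Icc x y) :
    ∫ v in x..y, (min u v - u * v) * (stdPDF (stdQuantile v))⁻¹ =
      (1 - u) * ((u * stdQuantile u + stdPDF (stdQuantile u))
        - (x * stdQuantile x + stdPDF (stdQuantile x)))
      + u * (((1 - y) * stdQuantile y - stdPDF (stdQuantile y))
        - ((1 - u) * stdQuantile u - stdPDF (stdQuantile u))) := by
  have hxu : x ≤ u := hu.1
  have huy : u ≤ y := hu.2
  have hsub1 : Set.Icc x u ⊆ Set.Ioo 0 1 := (Set.Icc_subset_Icc_right huy).trans hsub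
  have hsub2 : Set.Icc u y ⊆ Set.Ioo 0 1 := (Set.Icc_subset_Icc_left hxu).trans hsub
  have hcont : ContinuousOn (fun v => (min u v - u * v) * (stdPDF (stdQuantile v))⁻¹)
      (Set.Ioo 0 1) :=
    ((continuous_const.min continuous_id).continuousOn.sub
      (continuousOn_const.mul continuousOn_id)).mul contPinv
  have hi1 : IntervalIntegrable (fun v => (min u v - u * v) * (stdPDF (stdQuantile v))⁻¹)
      volume x u := by
    apply ContinuousOn.intervalIntegrable
    rw [Set.uIcc_of_le hxu]; exact hcont.mono hsub1
  have hi2 : IntervalIntegrable (fun v => (min u v - u * v) * (stdPDF (stdQuantile v))⁻¹)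
      volume u y := by
    apply ContinuousOn.intervalIntegrable
    rw [Set.uIcc_of_le huy]; exact hcont.mono hsub2
  rw [← intervalIntegral.integral_add_adjacent_intervals hi1 hi2]
  have e1 : ∫ v in x..u, (min u v - u * v) * (stdPDF (stdQuantile v))⁻¹ =
      (1 - u) * ((u * stdQuantile u + stdPDF (stdQuantile u))
        - (x * stdQuantile x + stdPDF (stdQuantile x))) := by
    rw [intervalIntegral.integral_congr
      (g := fun v => (1 - u) * (v * (stdPDF (stdQuantile v))⁻¹)) ?_]
    · rw [intervalIntegral.integral_const_mul, integral_id_mul_Qderiv hxu hsub1]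
    · intro v hv
      rw [Set.uIcc_of_le hxu] at hv
      simp only [min_eq_right hv.2]
      ring
  have e2 : ∫ v in u..y, (min u v - u * v) * (stdPDF (stdQuantile v))⁻¹ =
      u * (((1 - y) * stdQuantile y - stdPDF (stdQuantile y))
        - ((1 - u) * stdQuantile u - stdPDF (stdQuantile u))) := by
    rw [intervalIntegral.integral_congr
      (g := fun v => u * ((1 - v) * (stdPDF (stdQuantile v))⁻¹)) ?_]
    · rw [intervalIntegral.integral_const_mul, integral_one_sub_mul_Qderiv huy hsub2]
    · intro v hv
      rw [Set.uIcc_of_le huy] at hv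
      simp only [min_eq_left hv.1]
      ring
  rw [e1, e2]

lemma hasDerivAt_H0 {s : ℝ} (hs : s ∈ Set.Ioo (0:ℝ) 1) :
    HasDerivAt
      (fun t => t * (stdQuantile t) ^ 2 / 2 - t / 2 + stdQuantile t * stdPDF (stdQuantile t) / 2)
      (s * stdQuantile s * (stdPDF (stdQuantile s))⁻¹) s := by
  have hφ : stdPDF (stdQuantile s) ≠ 0 := ne_of_gt (stdPDF_pos _)
  have hQ := hasDerivAt_stdQuantile hs
  have hP := hasDerivAt_pdfQ hs
  have h1 := ((hasDerivAt_id s).mul (hQ.pow 2)).div_const 2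
  have h2 := (hasDerivAt_id s).div_const 2
  have h3 := (hQ.mul hP).div_const 2
  have h := (h1.sub h2).add h3
  refine h.congr_deriv ?_
  simp only [id, Pi.pow_apply]
  field_simp; ring

lemma hasDerivAt_QQ {s : ℝ} (hs : s ∈ Set.Ioo (0:ℝ) 1) :
    HasDerivAt (fun t => (stdQuantile t) ^ 2 / 2)
      (stdQuantile s * (stdPDF (stdQuantile s))⁻¹) s := by
  have hQ := hasDerivAt_stdQuantile hs
  have h := (hQ.pow 2).div_const 2
  refine h.congr_deriv ?_
  ring

lemma outer_ftc (c₁ c₂ : ℝ) {x y : ℝ} (hxy : x ≤ y) (hsub : Set.Icc x y ⊆ Set.Ioo 0 1) :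
    ∫ u in x..y,
      (stdQuantile u - c₁ * ((1 - u) * stdQuantile u * (stdPDF (stdQuantile u))⁻¹)
        + c₂ * (u * stdQuantile u * (stdPDF (stdQuantile u))⁻¹)) =
    (-stdPDF (stdQuantile y)
      - c₁ * ((stdQuantile y) ^ 2 / 2
          - (y * (stdQuantile y) ^ 2 / 2 - y / 2 + stdQuantile y * stdPDF (stdQuantile y) / 2))
      + c₂ * (y * (stdQuantile y) ^ 2 / 2 - y / 2 + stdQuantile y * stdPDF (stdQuantile y) / 2))
    - (-stdPDF (stdQuantile x)
      - c₁ * ((stdQuantile x) ^ 2 / 2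
          - (x * (stdQuantile x) ^ 2 / 2 - x / 2 + stdQuantile x * stdPDF (stdQuantile x) / 2))
      + c₂ * (x * (stdQuantile x) ^ 2 / 2 - x / 2 + stdQuantile x * stdPDF (stdQuantile x) / 2)) := by
  refine ftc_Ioo
    (F := fun t => -stdPDF (stdQuantile t)
      - c₁ * ((stdQuantile t) ^ 2 / 2
          - (t * (stdQuantile t) ^ 2 / 2 - t / 2 + stdQuantile t * stdPDF (stdQuantile t) / 2))
      + c₂ * (t * (stdQuantile t) ^ 2 / 2 - t / 2 + stdQuantile t * stdPDF (stdQuantile t) / 2))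
    hxy hsub (fun s hs => ?_) ?_
  · have hs' := hsub hs
    have hQQ := hasDerivAt_QQ hs'
    have hH0 := hasDerivAt_H0 hs'
    have hP := hasDerivAt_pdfQ hs'
    have h := (hP.neg.sub ((hQQ.sub hH0).const_mul c₁)).add (hH0.const_mul c₂)
    refine h.congr_deriv ?_
    ring
  · have cQ := contQ.mono hsub
    have cPi := contPinv.mono hsub
    exact (cQ.sub (continuousOn_const.mul
        (((continuousOn_const.sub continuousOn_id).mul cQ).mul cPi))).add
      (continuousOn_const.mul ((continuousOn_id.mul cQ).mul cPi))


/-- The double-integral expression for the second variance-covariance constant `c₂*`. -/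
theorem cStar_two_formula (a b : ℝ) (ha : 0 < a) (hb : 0 < b) (hab : a + b < 1) :
    (1 - a - b)⁻¹ ^ 2 *
      ∫ u in a..(1 - b), ∫ v in a..(1 - b),
        (min u v - u * v) * stdQuantile u /
          (stdPDF (stdQuantile v) * stdPDF (stdQuantile u)) =
    (2 * (1 - a - b) ^ 2)⁻¹ *
      (a * (1 - a) * (stdQuantile a) ^ 3 + b * (1 - b) * (stdQuantile (1 - b)) ^ 3
        - a * b * stdQuantile a * stdQuantile (1 - b) *
            (stdQuantile a + stdQuantile (1 - b))
        - (1 - a - b) * trimMoment a b 1 *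
            (a * (stdQuantile a) ^ 2 + b * (stdQuantile (1 - b)) ^ 2)
        - (1 - a - b) * trimMoment a b 2 *
            (a * stdQuantile a + b * stdQuantile (1 - b))
        - (1 - a - b) ^ 2 * trimMoment a b 1 * trimMoment a b 2
        + (1 - a - b) * trimMoment a b 3) := by
  have hτ : (1:ℝ) - a - b ≠ 0 := ne_of_gt (by linarith)
  have hab' : a ≤ 1 - b := by linarith
  have hsub : Set.Icc a (1 - b) ⊆ Set.Ioo 0 1 := fun s hs =>
    ⟨lt_of_lt_of_le ha hs.1, lt_of_le_of_lt hs.2 (by linarith)⟩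
  set c₁ : ℝ := a * stdQuantile a + stdPDF (stdQuantile a) with hc₁
  set c₂ : ℝ := (1 - (1 - b)) * stdQuantile (1 - b) - stdPDF (stdQuantile (1 - b)) with hc₂
  have hmain : (∫ u in a..(1 - b), ∫ v in a..(1 - b),
        (min u v - u * v) * stdQuantile u /
          (stdPDF (stdQuantile v) * stdPDF (stdQuantile u))) =
      ∫ u in a..(1 - b),
        (stdQuantile u - c₁ * ((1 - u) * stdQuantile u * (stdPDF (stdQuantile u))⁻¹)
          + c₂ * (u * stdQuantile u * (stdPDF (stdQuantile u))⁻¹)) := by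
    apply intervalIntegral.integral_congr
    intro u hu
    rw [Set.uIcc_of_le hab'] at hu
    have hφ : stdPDF (stdQuantile u) ≠ 0 := ne_of_gt (stdPDF_pos _)
    show (∫ v in a..(1 - b),
        (min u v - u * v) * stdQuantile u /
          (stdPDF (stdQuantile v) * stdPDF (stdQuantile u))) = _
    have h1 : (∫ v in a..(1 - b),
        (min u v - u * v) * stdQuantile u /
          (stdPDF (stdQuantile v) * stdPDF (stdQuantile u))) =
        ∫ v in a..(1 - b),
          ((min u v - u * v) * (stdPDF (stdQuantile v))⁻¹) *
            (stdQuantile u * (stdPDF (stdQuantile u))⁻¹) := by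
      apply intervalIntegral.integral_congr
      intro v _
      simp only []
      rw [div_eq_mul_inv, mul_inv]
      ring
    rw [h1, intervalIntegral.integral_mul_const, inner_eval hsub hu]
    rw [← hc₁, ← hc₂]
    linear_combination stdQuantile u * mul_inv_cancel₀ hφ
  rw [hmain, outer_ftc c₁ c₂ hab' hsub]
  have t1 : trimMoment a b 1 =
      (1 - a - b)⁻¹ * (stdPDF (stdQuantile a) - stdPDF (stdQuantile (1 - b))) := by
    unfold trimMoment
    rw [integral_Q_pow_one hab' hsub]
  have t2 : trimMoment a b 2 =
      (1 - a - b)⁻¹ * (((1 - b) - stdQuantile (1 - b) * stdPDF (stdQuantile (1 - b)))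
        - (a - stdQuantile a * stdPDF (stdQuantile a))) := by
    unfold trimMoment
    rw [integral_Q_pow_two hab' hsub]
  have t3 : trimMoment a b 3 =
      (1 - a - b)⁻¹ *
        ((-2 * stdPDF (stdQuantile (1 - b))
            - (stdQuantile (1 - b)) ^ 2 * stdPDF (stdQuantile (1 - b)))
          - (-2 * stdPDF (stdQuantile a) - (stdQuantile a) ^ 2 * stdPDF (stdQuantile a))) := by
    unfold trimMoment
    rw [integral_Q_pow_three hab' hsub]
  rw [t1, t2, t3, hc₁, hc₂]
  field_simp
  ring
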